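/- Let W : [1, ∞) → ℝ be continuous with |W(r)| ≤ a for 1 ≤ r ≤ 3, where 0 < a ≤ (1+√3)/(5+3√3), and |W(r)| ≤ 1 - 1/r - 1/(2r^2) for r ≥ 3. Then ∫_1^∞ (3 W(r)^2 - 1)/r^2 dr < 0. -/

import Mathlib

set_option maxHeartbeats 800000

open Real Set MeasureTheory

theorem potential_integral_negative
    (W : ℝ → ℝ) (a : ℝ) (ha : 0 < a)
    (ha1 : a ≤ (1 + Real.sqrt 3) / (5 + 3 * Real.sqrt 3))
    (hcont : ContinuousOn W (Ici 1))
    (hbd1 : ∀ r ∈ Icc (1:ℝ) 3, |W r| ≤ a)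
    (hbd2 : ∀ r : ℝ, 3 ≤ r → |W r| ≤ 1 - 1 / r - 1 / (2 * r ^ 2)) :
    ∫ r in Ioi (1:ℝ), (3 * (W r) ^ 2 - 1) / r ^ 2 < 0 := by
  set s := Real.sqrt 3 with hs_def
  have hs2 : s ^ 2 = 3 := Real.sq_sqrt (by norm_num)
  have hs0 : 0 ≤ s := Real.sqrt_nonneg 3
  have hs_lb : (1.72 : ℝ) ≤ s := by nlinarith
  have hs_ub : s ≤ 1.74 := by nlinarith
  have ha2 : a ≤ 2 - s := by
    have hden : (0:ℝ) < 5 + 3 * s := by linarith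
    have : (1 + s) / (5 + 3 * s) = 2 - s := by
      rw [div_eq_iff hden.ne']; nlinarith
    linarith [ha1.trans_eq this]
  set f : ℝ → ℝ := fun r => (3 * (W r) ^ 2 - 1) / r ^ 2 with hf
  -- continuity of f on Ici 1
  have hfcont : ContinuousOn f (Ici 1) := by
    apply ContinuousOn.div
    · exact (continuousOn_const.mul (hcont.pow 2)).sub continuousOn_const
    · exact continuousOn_id.pow 2
    · intro x hx
      have : (1:ℝ) ≤ x := hx
      positivity
  -- integrability on Ioc 1 3
  have hI1 : IntegrableOn f (Ioc 1 3) := by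
    have : IntegrableOn f (Icc 1 3) :=
      (hfcont.mono Icc_subset_Ici_self).integrableOn_Icc
    exact this.mono_set Ioc_subset_Icc_self
  -- the dominating function on Ioi 3
  set g : ℝ → ℝ := fun r => (3 * (1 - 1 / r) ^ 2 - 1) / r ^ 2 with hg_def
  set F : ℝ → ℝ := fun r => (1 - 1 / r) ^ 3 + 1 / r with hF_def
  have hderiv : ∀ x ∈ Ici (3:ℝ), HasDerivAt F (g x) x := by
    intro x hx
    have hx3 : (3:ℝ) ≤ x := hx
    have hx0 : (0:ℝ) < x := by linarith
    have hinv : HasDerivAt (fun r : ℝ => 1 / r) (-(x ^ 2)⁻¹) x := by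
      simpa [one_div] using hasDerivAt_inv hx0.ne'
    have h1 : HasDerivAt (fun r : ℝ => 1 - 1 / r) (0 - -(x ^ 2)⁻¹) x :=
      (hasDerivAt_const x 1).sub hinv
    have h2 := (h1.pow 3).add hinv
    refine h2.congr_deriv ?_
    simp only [hg_def, one_div, div_eq_mul_inv, ← inv_pow]
    push_cast
    ring
  have hgpos : ∀ x ∈ Ioi (3:ℝ), 0 ≤ g x := by
    intro x hx
    have hx3 : (3:ℝ) < x := hx
    have hx0 : (0:ℝ) < x := by linarith
    have h1 : 1 / x ≤ 1 / 3 := by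
      rw [div_le_div_iff₀ hx0 (by norm_num)]; linarith
    have h2 : 0 < 1 / x := by positivity
    apply div_nonneg _ (by positivity)
    nlinarith
  have htend : Filter.Tendsto F Filter.atTop (nhds 1) := by
    have h0 : Filter.Tendsto (fun r : ℝ => 1 / r) Filter.atTop (nhds 0) := by
      simpa [one_div] using tendsto_inv_atTop_zero
    have hc : Filter.Tendsto (fun _ : ℝ => (1:ℝ)) Filter.atTop (nhds 1) :=
      tendsto_const_nhds
    have h1 := (((hc.sub h0).pow 3).add h0 :)
    norm_num at h1
    simpa [hF_def, one_div] using h1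
  have hgint : IntegrableOn g (Ioi 3) :=
    integrableOn_Ioi_deriv_of_nonneg' hderiv hgpos htend
  have hgval : ∫ x in Ioi (3:ℝ), g x = 10 / 27 := by
    rw [integral_Ioi_of_hasDerivAt_of_nonneg' hderiv hgpos htend]
    norm_num [hF_def]
  -- integrability of f on Ioi 3
  have hsub : Ioi (3:ℝ) ⊆ Ici 1 := fun x hx => le_of_lt (show (1:ℝ) < x by
    have : (3:ℝ) < x := hx; linarith)
  have hWsq : ∀ x : ℝ, 3 < x → (W x) ^ 2 ≤ (1 - 1 / x) ^ 2 := by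
    intro x hx
    have hx0 : (0:ℝ) < x := by linarith
    have h2 : 0 < 1 / (2 * x ^ 2) := by positivity
    have hW : |W x| ≤ 1 - 1 / x := by
      have := hbd2 x hx.le; linarith
    calc (W x) ^ 2 = |W x| ^ 2 := (sq_abs _).symm
      _ ≤ (1 - 1 / x) ^ 2 := by
          apply pow_le_pow_left₀ (abs_nonneg _) hW
  have base : IntegrableOn (fun r : ℝ => r ^ (-2:ℝ)) (Ioi 3) :=
    integrableOn_Ioi_rpow_of_lt (by norm_num) (by norm_num)
  have hI3 : IntegrableOn f (Ioi 3) := by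
    apply Integrable.mono' (base.const_mul 2)
    · exact (hfcont.mono hsub).aestronglyMeasurable measurableSet_Ioi
    · filter_upwards [ae_restrict_mem measurableSet_Ioi] with x hx
      have hx3 : (3:ℝ) < x := hx
      have hx0 : (0:ℝ) < x := by linarith
      have hW2 := hWsq x hx3
      have h1 : 1 / x ≤ 1 / 3 := by
        rw [div_le_div_iff₀ hx0 (by norm_num)]; linarith
      have h2 : 0 < 1 / x := by positivity
      have hrp : x ^ (-2:ℝ) = (x ^ 2)⁻¹ := by
        rw [Real.rpow_neg hx0.le]
        norm_cast
      rw [hf]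
      simp only [Real.norm_eq_abs, hrp]
      rw [abs_div, abs_of_nonneg (by positivity : (0:ℝ) ≤ x ^ 2),
        show (2:ℝ) * (x ^ 2)⁻¹ = 2 / x ^ 2 by rw [div_eq_mul_inv]]
      apply div_le_div_of_nonneg_right _ (by positivity)
      rw [abs_le]
      constructor
      · nlinarith [sq_nonneg (W x)]
      · nlinarith
  -- split the integral
  have hsplit : ∫ r in Ioi (1:ℝ), f r
      = (∫ r in Ioc (1:ℝ) 3, f r) + ∫ r in Ioi (3:ℝ), f r := by
    rw [← Ioc_union_Ioi_eq_Ioi (by norm_num : (1:ℝ) ≤ 3),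
      setIntegral_union (Ioc_disjoint_Ioi le_rfl) measurableSet_Ioi hI1 hI3]
  -- bound on Ioc 1 3
  have hbound1 : ∫ r in Ioc (1:ℝ) 3, f r ≤ (3 * a ^ 2 - 1) * (2 / 3) := by
    have hI1' : IntegrableOn (fun r : ℝ => (3 * a ^ 2 - 1) / r ^ 2) (Ioc 1 3) := by
      have : ContinuousOn (fun r : ℝ => (3 * a ^ 2 - 1) / r ^ 2) (Icc 1 3) := by
        apply continuousOn_const.div (continuousOn_id.pow 2)
        intro x hx
        have : (1:ℝ) ≤ x := hx.1
        show x ^ 2 ≠ 0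
        positivity
      exact this.integrableOn_Icc.mono_set Ioc_subset_Icc_self
    have hmono : ∫ r in Ioc (1:ℝ) 3, f r
        ≤ ∫ r in Ioc (1:ℝ) 3, (3 * a ^ 2 - 1) / r ^ 2 := by
      apply setIntegral_mono_on hI1 hI1' measurableSet_Ioc
      intro x hx
      have hx1 : (1:ℝ) < x := hx.1
      have hW : |W x| ≤ a := hbd1 x ⟨hx.1.le, hx.2⟩
      have hW2 : (W x) ^ 2 ≤ a ^ 2 := by
        calc (W x) ^ 2 = |W x| ^ 2 := (sq_abs _).symm
          _ ≤ a ^ 2 := pow_le_pow_left₀ (abs_nonneg _) hW 2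
      apply div_le_div_of_nonneg_right (by linarith) (by positivity)
    have hval : ∫ r in Ioc (1:ℝ) 3, (3 * a ^ 2 - 1) / r ^ 2
        = (3 * a ^ 2 - 1) * (2 / 3) := by
      rw [← intervalIntegral.integral_of_le (by norm_num : (1:ℝ) ≤ 3)]
      have hd : ∀ x ∈ uIcc (1:ℝ) 3,
          HasDerivAt (fun r : ℝ => -(3 * a ^ 2 - 1) * r⁻¹)
            ((3 * a ^ 2 - 1) / x ^ 2) x := by
        intro x hx
        rw [uIcc_of_le (by norm_num)] at hx
        have hx0 : (0:ℝ) < x := by linarith [hx.1]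
        have hinv : HasDerivAt (fun r : ℝ => r⁻¹) (-(x ^ 2)⁻¹) x :=
          hasDerivAt_inv hx0.ne'
        have h := hinv.const_mul (-(3 * a ^ 2 - 1))
        refine h.congr_deriv ?_
        have hx' : x ≠ 0 := hx0.ne'
        field_simp
      have hint : IntervalIntegrable (fun r : ℝ => (3 * a ^ 2 - 1) / r ^ 2)
          volume 1 3 := by
        apply ContinuousOn.intervalIntegrable
        rw [uIcc_of_le (by norm_num)]
        apply continuousOn_const.div (continuousOn_id.pow 2)
        intro x hx
        have : (1:ℝ) ≤ x := hx.1
        show x ^ 2 ≠ 0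
        positivity
      rw [intervalIntegral.integral_eq_sub_of_hasDerivAt hd hint]
      ring
    linarith [hmono.trans_eq hval]
  -- bound on Ioi 3
  have hbound2 : ∫ r in Ioi (3:ℝ), f r ≤ 10 / 27 := by
    rw [← hgval]
    apply setIntegral_mono_on hI3 hgint measurableSet_Ioi
    intro x hx
    have hx3 : (3:ℝ) < x := hx
    have hx0 : (0:ℝ) < x := by linarith
    exact div_le_div_of_nonneg_right (by nlinarith [hWsq x hx3]) (by positivity)
  rw [hf] at hsplit ⊢
  rw [hsplit]
  nlinarith [hbound1, hbound2]
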